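/- For every n ≥ 4: in any ortholattice, if the n-Go equation holds for all elements, then the (n−1)-Go equation holds for all elements. -/

import Mathlib

/-- An ortholattice: a bounded lattice with an orthocomplementation. -/
class Ortholattice (α : Type*) extends Lattice α, BoundedOrder α, Compl α where
  compl_compl : ∀ a : α, aᶜᶜ = a
  compl_le_compl : ∀ a b : α, a ≤ b → bᶜ ≤ aᶜ
  inf_compl_self : ∀ a : α, a ⊓ aᶜ = ⊥
  sup_compl_self : ∀ a : α, a ⊔ aᶜ = ⊤

/-- The Sasaki hook `a → b := a' ⊔ (a ⊓ b)`. -/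
def sasaki {α : Type*} [Ortholattice α] (a b : α) : α := aᶜ ⊔ (a ⊓ b)

/-- The n-Go equation `a₁ ≡γ aₙ = aₙ ≡γ a₁` holds for all elements, where
`a₁ ≡γ aₙ = (a₁→a₂) ⊓ ⋯ ⊓ (aₙ₋₁→aₙ) ⊓ (aₙ→a₁)` and
`aₙ ≡γ a₁ = (aₙ→aₙ₋₁) ⊓ ⋯ ⊓ (a₂→a₁) ⊓ (a₁→aₙ)`. -/
def GoLaw (α : Type*) [Ortholattice α] (n : ℕ) : Prop :=
  ∀ (hn : 3 ≤ n) (a : Fin n → α),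
    (Finset.univ.inf fun i : Fin n => sasaki (a i) (a (i + ⟨1, by omega⟩))) =
      (Finset.univ.inf fun i : Fin n => sasaki (a (i + ⟨1, by omega⟩)) (a i))

lemma sasaki_self {α : Type*} [Ortholattice α] (a : α) : sasaki a a = ⊤ := by
  rw [sasaki, inf_idem, sup_comm, Ortholattice.sup_compl_self]

lemma inf_univ_succ {α : Type*} [Ortholattice α] {m : ℕ} (f : Fin (m+1) → α) :
    Finset.univ.inf f = f (Fin.last m) ⊓ Finset.univ.inf (fun i : Fin m => f i.castSucc) := by
  rw [Fin.univ_castSuccEmb, Finset.inf_cons, Finset.inf_map]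
  rfl

/-- For every `n ≥ 4`, in any ortholattice the n-Go equation implies the
(n-1)-Go equation. -/
theorem stmt_10 {α : Type*} [Ortholattice α] :
    ∀ n : ℕ, 4 ≤ n → GoLaw α n → GoLaw α (n - 1) := by
  intro n hn4 hgo
  obtain ⟨m, rfl⟩ : ∃ m, n = m + 1 := ⟨n - 1, by omega⟩
  simp only [Nat.add_sub_cancel]
  intro hm a
  have hm3 : 3 ≤ m := by simpa using hm
  set b : Fin (m + 1) → α := fun i => a ⟨i.val % m, Nat.mod_lt _ (by omega)⟩ with hb
  have key := hgo (by omega) b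
  have hlast : b (Fin.last m) = a ⟨0, by omega⟩ := by
    simp only [hb]
    congr 1
    exact Fin.ext (by simp [Fin.last])
  have hlast1 : b (Fin.last m + ⟨1, by omega⟩) = a ⟨0, by omega⟩ := by
    have h : (Fin.last m + (⟨1, by omega⟩ : Fin (m+1))).val = 0 := by
      simp [Fin.add_def, Fin.last]
    simp only [hb]
    congr 1
    exact Fin.ext (by simp [h])
  have hcast : ∀ i : Fin m, b i.castSucc = a i := by
    intro i
    simp only [hb]
    congr 1
    exact Fin.ext (by simp [Nat.mod_eq_of_lt i.isLt])
  have hcast1 : ∀ i : Fin m, b (i.castSucc + ⟨1, by omega⟩) = a (i + ⟨1, by omega⟩) := by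
    intro i
    have h1 : (i.castSucc + (⟨1, by omega⟩ : Fin (m+1))).val = i.val + 1 := by
      simp [Fin.add_def]
    have h2 : (i + (⟨1, by omega⟩ : Fin m)).val = (i.val + 1) % m := by
      simp [Fin.add_def]
    simp only [hb]
    congr 1
    exact Fin.ext (by simp [h1, h2])
  rw [inf_univ_succ, inf_univ_succ, hlast, hlast1, sasaki_self, top_inf_eq, top_inf_eq] at key
  have e1 : (fun i : Fin m => sasaki (b i.castSucc) (b (i.castSucc + ⟨1, by omega⟩)))
      = fun i : Fin m => sasaki (a i) (a (i + ⟨1, by omega⟩)) := by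
    funext i; rw [hcast, hcast1]
  have e2 : (fun i : Fin m => sasaki (b (i.castSucc + ⟨1, by omega⟩)) (b i.castSucc))
      = fun i : Fin m => sasaki (a (i + ⟨1, by omega⟩)) (a i) := by
    funext i; rw [hcast, hcast1]
  rw [e1, e2] at key
  exact key
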